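/- Gauss' Test (divergence part): Let (a_n) be positive with a_{n+1}/a_n = 1 - β/n + γ(n)/n^{1+λ} for all n ≥ 1, where λ > 0, β ≤ 1 is constant, and γ is bounded. Then ∑ a_n diverges. -/

import Mathlib

open Filter Topology

private lemma gauss_key_ineq {n x y Cv : ℝ} (hn : 1 ≤ n) (hC : 0 ≤ Cv)
    (hu : n * x = 1) (hy : 0 ≤ y) (hxy : x ≤ n * y) :
    n * (1 - (1 + 2*Cv) * y) ≤ (n + 1) * (1 - x - Cv * y) := by
  nlinarith [mul_nonneg (mul_nonneg (by linarith : (0:ℝ) ≤ n - 1) hC) hy]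

private lemma exp_neg_two_le_one_sub {x : ℝ} (hx0 : 0 ≤ x) (hx2 : x ≤ 1/2) :
    Real.exp (-(2*x)) ≤ 1 - x := by
  have key : 1 ≤ (1 - x) * Real.exp (2*x) := by
    nlinarith [Real.add_one_le_exp (2*x), Real.exp_pos (2*x)]
  have h2 := Real.exp_pos (2*x)
  rw [Real.exp_neg, inv_eq_one_div, div_le_iff₀ h2]
  linarith [key]

theorem gauss_test_divergence (a : ℕ → ℝ) (ha : ∀ n, 0 < a n)
    (lam β : ℝ) (hlam : 0 < lam) (hβ : β ≤ 1) (γ : ℕ → ℝ)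
    (hγ : ∃ C : ℝ, ∀ n, |γ n| ≤ C)
    (hratio : ∀ n : ℕ, 1 ≤ n →
      a (n + 1) / a n = 1 - β / n + γ n / (n : ℝ) ^ (1 + lam)) :
    ¬ Summable a := by
  obtain ⟨C₀, hC₀⟩ := hγ
  set C : ℝ := max C₀ 0 with hCdef
  have hC : ∀ n, |γ n| ≤ C := fun n => (hC₀ n).trans (le_max_left _ _)
  have hC0 : 0 ≤ C := le_max_right _ _
  set μ : ℝ := min lam 1 with hμdef
  have hμ : 0 < μ := lt_min hlam one_pos
  have hμ1 : μ ≤ 1 := min_le_right _ _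
  have hμlam : μ ≤ lam := min_le_left _ _
  set K : ℝ := 1 + 2*C with hKdef
  have hK : 0 < K := by positivity
  set g : ℕ → ℝ := fun k => 1 / (k : ℝ) ^ (1+μ) with hgdef
  have hg_nonneg : ∀ k, 0 ≤ g k := fun k => by positivity
  have hg_sum : Summable g := by
    apply (Real.summable_one_div_nat_rpow).mpr
    linarith
  set S : ℝ := ∑' k, g k with hSdef
  set N₀ : ℕ := max 1 ⌈2*K⌉₊ with hN₀def
  have hN₀1 : 1 ≤ N₀ := le_max_left _ _
  -- the key step inequality
  have hstep : ∀ n : ℕ, N₀ ≤ n →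
      (n : ℝ) * a n * Real.exp (-(2*(K * g n))) ≤ ((n : ℝ)+1) * a (n+1) := by
    intro n hn
    have hn1 : 1 ≤ n := le_trans hN₀1 hn
    have hnR : (1:ℝ) ≤ (n:ℝ) := by exact_mod_cast hn1
    have hnpos : (0:ℝ) < n := by linarith
    set P : ℝ := (n:ℝ) ^ (1+μ) with hPdef
    have hP : 0 < P := Real.rpow_pos_of_pos hnpos _
    set Q : ℝ := (n:ℝ) ^ (1+lam) with hQdef
    have hQ : 0 < Q := Real.rpow_pos_of_pos hnpos _
    have hPQ : P ≤ Q := Real.rpow_le_rpow_of_exponent_le hnR (by linarith)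
    have hnP : (n:ℝ) ≤ P := by
      calc (n:ℝ) = (n:ℝ) ^ (1:ℝ) := (Real.rpow_one _).symm
        _ ≤ P := Real.rpow_le_rpow_of_exponent_le hnR (by linarith)
    have hPn2 : P ≤ (n:ℝ) * n := by
      calc P ≤ (n:ℝ) ^ (2:ℝ) := Real.rpow_le_rpow_of_exponent_le hnR (by linarith)
        _ = (n:ℝ) * n := by
            rw [show (2:ℝ) = ((2:ℕ):ℝ) by norm_num, Real.rpow_natCast]
            ring
    -- x := K * g n  =  K / P, and x ≤ 1/2
    have hgn : g n = 1 / P := rfl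
    have hx0 : 0 ≤ K * g n := mul_nonneg hK.le (hg_nonneg n)
    have h2Kn : 2*K ≤ (n:ℝ) := by
      have h1 : 2*K ≤ (⌈2*K⌉₊ : ℝ) := Nat.le_ceil _
      have h2 : (⌈2*K⌉₊ : ℕ) ≤ n := le_trans (le_max_right 1 _) hn
      have : ((⌈2*K⌉₊ : ℕ) : ℝ) ≤ (n:ℝ) := by exact_mod_cast h2
      linarith
    have hx2 : K * g n ≤ 1/2 := by
      rw [hgn]
      rw [mul_one_div, div_le_iff₀ hP]
      nlinarith [hnP]
    have hexp : Real.exp (-(2*(K * g n))) ≤ 1 - K * g n :=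
      exp_neg_two_le_one_sub hx0 hx2
    -- the ratio identity
    have hr := hratio n hn1
    have hans : a n ≠ 0 := (ha n).ne'
    have haeq : a (n+1) = (1 - β / n + γ n / Q) * a n := by
      rw [div_eq_iff hans] at hr
      exact hr
    -- key algebraic inequality: n * (1 - K/P) ≤ (n+1) * (1 - β/n + γ n / Q)
    have hγn : -C ≤ γ n := neg_le_of_abs_le (hC n)
    have hβn : β / n ≤ 1 / n := by gcongr
    have hγQ : -(C / P) ≤ γ n / Q := by
      have h1 : -(C/Q) ≤ γ n / Q := by
        rw [← neg_div]
        gcongr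
      have h2 : C / Q ≤ C / P := by gcongr
      linarith
    have hxny : 1 / (n:ℝ) ≤ (n:ℝ) * (1/P) := by
      rw [mul_one_div, div_le_div_iff₀ hnpos hP]
      nlinarith [hPn2]
    have hkey : (n:ℝ) * (1 - K * g n) ≤ ((n:ℝ)+1) * (1 - β / n + γ n / Q) := by
      have hA : ((n:ℝ)+1) * (1 - 1/(n:ℝ) - C * (1/P)) ≤ ((n:ℝ)+1) * (1 - β / n + γ n / Q) := by
        apply mul_le_mul_of_nonneg_left _ (by linarith)
        have : C * (1/P) = C / P := mul_one_div _ _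
        linarith [hβn, hγQ, this]
      have hB : (n:ℝ) * (1 - K * g n) ≤ ((n:ℝ)+1) * (1 - 1/(n:ℝ) - C * (1/P)) := by
        have hyP : (0:ℝ) ≤ 1/P := by positivity
        have hu : (n:ℝ) * (1/(n:ℝ)) = 1 := by field_simp
        have hKg : K * g n = (1 + 2*C) * (1/P) := by rw [hgn, hKdef]
        rw [hKg]
        exact gauss_key_ineq hnR hC0 hu hyP hxny
      linarith
    calc (n : ℝ) * a n * Real.exp (-(2*(K * g n)))
        ≤ (n : ℝ) * a n * (1 - K * g n) := by
          exact mul_le_mul_of_nonneg_left hexp (mul_nonneg hnpos.le (ha n).le)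
      _ = (n:ℝ) * (1 - K * g n) * a n := by ring
      _ ≤ ((n:ℝ)+1) * (1 - β / n + γ n / Q) * a n :=
          mul_le_mul_of_nonneg_right hkey (ha n).le
      _ = ((n : ℝ)+1) * a (n+1) := by rw [haeq]; ring
  -- induction: lower bound for d n := n * a n
  set d : ℕ → ℝ := fun n => (n:ℝ) * a n with hddef
  have hind : ∀ m : ℕ,
      d N₀ * Real.exp (-(2*(K * ∑ k ∈ Finset.Ico N₀ (N₀+m), g k))) ≤ d (N₀ + m) := by
    intro m
    induction m with
    | zero => simp
    | succ m ih =>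
      have hle : N₀ ≤ N₀ + m := Nat.le_add_right _ _
      rw [show N₀ + (m+1) = (N₀+m) + 1 by ring, Finset.sum_Ico_succ_top hle]
      have hsplit : Real.exp (-(2*(K * ((∑ k ∈ Finset.Ico N₀ (N₀+m), g k) + g (N₀+m)))))
          = Real.exp (-(2*(K * ∑ k ∈ Finset.Ico N₀ (N₀+m), g k))) * Real.exp (-(2*(K * g (N₀+m)))) := by
        rw [← Real.exp_add]; congr 1; ring
      rw [hsplit, ← mul_assoc]
      calc d N₀ * Real.exp (-(2*(K * ∑ k ∈ Finset.Ico N₀ (N₀+m), g k))) * Real.exp (-(2*(K * g (N₀+m))))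
          ≤ d (N₀+m) * Real.exp (-(2*(K * g (N₀+m)))) :=
            mul_le_mul_of_nonneg_right ih (Real.exp_pos _).le
        _ ≤ d ((N₀+m)+1) := by
            have := hstep (N₀+m) hle
            have hcast : ((N₀+m : ℕ):ℝ) + 1 = (((N₀+m)+1 : ℕ):ℝ) := by push_cast; ring
            simpa [hddef, hcast] using this
  -- hence d n ≥ c for n ≥ N₀
  set c : ℝ := d N₀ * Real.exp (-(2*(K * S))) with hcdef
  have hdN₀ : 0 < d N₀ := by
    have : (0:ℝ) < (N₀:ℝ) := by exact_mod_cast hN₀1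
    exact mul_pos this (ha N₀)
  have hc : 0 < c := mul_pos hdN₀ (Real.exp_pos _)
  have hlb : ∀ n, N₀ ≤ n → c ≤ d n := by
    intro n hn
    obtain ⟨m, rfl⟩ := Nat.exists_eq_add_of_le hn
    refine le_trans ?_ (hind m)
    apply mul_le_mul_of_nonneg_left _ hdN₀.le
    apply Real.exp_le_exp.mpr
    have hpart : ∑ k ∈ Finset.Ico N₀ (N₀+m), g k ≤ S :=
      hg_sum.sum_le_tsum _ (fun i _ => hg_nonneg i)
    nlinarith [hK]
  -- conclude
  intro hsum
  have hsum' : Summable (fun m => a (m + N₀)) := (summable_nat_add_iff N₀).mpr hsum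
  have hcomp : Summable (fun m : ℕ => c / ((m + N₀ : ℕ) : ℝ)) := by
    apply Summable.of_nonneg_of_le (fun m => by positivity) _ hsum'
    intro m
    have hm : N₀ ≤ m + N₀ := Nat.le_add_left _ _
    have := hlb (m + N₀) hm
    have hpos : (0:ℝ) < ((m + N₀ : ℕ):ℝ) := by
      have : (0:ℕ) < m + N₀ := lt_of_lt_of_le hN₀1 hm
      exact_mod_cast this
    rw [div_le_iff₀ hpos]
    calc c ≤ d (m + N₀) := this
      _ = a (m + N₀) * ((m + N₀ : ℕ):ℝ) := by rw [hddef]; ring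
  have hone : Summable (fun m : ℕ => 1 / ((m + N₀ : ℕ) : ℝ)) := by
    have h := hcomp.mul_left c⁻¹
    refine h.congr fun m => ?_
    rw [← mul_div_assoc, inv_mul_cancel₀ hc.ne']
  have : Summable (fun n : ℕ => 1 / (n : ℝ)) :=
    (summable_nat_add_iff N₀).mp hone
  exact Real.not_summable_one_div_natCast this
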